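/- arXiv:0807.0690 — 2 statements merged into one kernel-verified Lean document; each statement's English description precedes it below -/
import Mathlib

section
/- Let d ≥ 5 and let u ∈ Ḣ²(ℝ^d) satisfy ‖Δu‖_{L²} < ‖ΔW‖_{L²} and E(u) ≤ (1-δ₀) E(W) for some δ₀ > 0. Then there exists δ̄ = δ̄(δ₀, d) > 0 such that ∫|Δu|² ≤ (1-δ̄) ∫|ΔW|². -/
noncomputable section

open Real

/-- Energy trapping, first part. For `u ∈ Ḣ²(ℝ^d)`, write `K = ∫|Δu|²` and
`P = ∫|u|^{2d/(d−4)}`; the Sobolev inequality reads `P^{(d−4)/(2d)} ≤ C_d K^{1/2}`,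
`‖ΔW‖₂² = C_d^{−d/2}` and `E(W) = (2/d) C_d^{−d/2}`. If `K < ‖ΔW‖₂²` and
`E(u) = K/2 − ((d−4)/(2d))P ≤ (1−δ₀)E(W)`, then `K ≤ (1−δ̄)‖ΔW‖₂²` for some
`δ̄ = δ̄(δ₀, d) > 0`. -/
theorem energy_trapping_kinetic (d : ℕ) (hd : 5 ≤ d) (Cd : ℝ) (hCd : 0 < Cd)
    (δ₀ : ℝ) (hδ₀ : 0 < δ₀) :
    ∃ δb > (0 : ℝ), ∀ K P : ℝ, 0 ≤ K → 0 ≤ P →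
      P ^ (((d : ℝ) - 4) / (2 * (d : ℝ))) ≤ Cd * K ^ ((1 : ℝ) / 2) →
      K < Cd ^ (-(d : ℝ) / 2) →
      K / 2 - ((d : ℝ) - 4) / (2 * (d : ℝ)) * P ≤
        (1 - δ₀) * (2 / (d : ℝ) * Cd ^ (-(d : ℝ) / 2)) →
      K ≤ (1 - δb) * Cd ^ (-(d : ℝ) / 2) := by
  refine ⟨δ₀, hδ₀, fun K P hK hP hSob hKW hE => ?_⟩
  have hd5 : (5:ℝ) ≤ (d:ℝ) := by exact_mod_cast hd
  have hd0 : (0:ℝ) < (d:ℝ) := by linarith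
  have hd4 : (0:ℝ) < (d:ℝ) - 4 := by linarith
  set z : ℝ := 2 * (d:ℝ) / ((d:ℝ) - 4) with hz
  have hz0 : 0 < z := by positivity
  have hW2 : (0:ℝ) < Cd ^ (-(d:ℝ)/2) := Real.rpow_pos_of_pos hCd _
  -- Sobolev raised to power z
  have e1 : (P ^ (((d:ℝ) - 4) / (2 * (d:ℝ)))) ^ z = P := by
    rw [← Real.rpow_mul hP,
      show ((d:ℝ) - 4) / (2 * (d:ℝ)) * z = 1 by rw [hz]; field_simp,
      Real.rpow_one]
  have e2 : (Cd * K ^ ((1:ℝ)/2)) ^ z = Cd ^ z * K ^ ((d:ℝ)/((d:ℝ) - 4)) := by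
    rw [Real.mul_rpow hCd.le (Real.rpow_nonneg hK _), ← Real.rpow_mul hK]
    congr 2
    rw [hz]; field_simp
  have h1 : P ≤ Cd ^ z * K ^ ((d:ℝ)/((d:ℝ) - 4)) := by
    calc P = (P ^ (((d:ℝ) - 4) / (2 * (d:ℝ)))) ^ z := e1.symm
      _ ≤ (Cd * K ^ ((1:ℝ)/2)) ^ z :=
          Real.rpow_le_rpow (Real.rpow_nonneg hP _) hSob hz0.le
      _ = _ := e2
  -- split the exponent
  have h2 : K ^ ((d:ℝ)/((d:ℝ) - 4)) = K * K ^ ((4:ℝ)/((d:ℝ) - 4)) := by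
    rw [show (d:ℝ)/((d:ℝ) - 4) = 1 + 4/((d:ℝ) - 4) by field_simp; ring,
      Real.rpow_add' hK (by positivity), Real.rpow_one]
  have h3 : K ^ ((4:ℝ)/((d:ℝ) - 4)) ≤ (Cd ^ (-(d:ℝ)/2)) ^ ((4:ℝ)/((d:ℝ) - 4)) :=
    Real.rpow_le_rpow hK hKW.le (by positivity)
  have h4 : Cd ^ z * (Cd ^ (-(d:ℝ)/2)) ^ ((4:ℝ)/((d:ℝ) - 4)) = 1 := by
    rw [← Real.rpow_mul hCd.le, ← Real.rpow_add hCd,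
      show z + -(d:ℝ)/2 * (4/((d:ℝ) - 4)) = 0 by rw [hz]; field_simp; ring,
      Real.rpow_zero]
  have hCz : (0:ℝ) ≤ Cd ^ z := (Real.rpow_pos_of_pos hCd z).le
  have h5 : Cd ^ z * K ^ ((d:ℝ)/((d:ℝ) - 4)) ≤ K := by
    rw [h2]
    calc Cd ^ z * (K * K ^ ((4:ℝ)/((d:ℝ) - 4)))
        ≤ Cd ^ z * (K * (Cd ^ (-(d:ℝ)/2)) ^ ((4:ℝ)/((d:ℝ) - 4))) :=
          mul_le_mul_of_nonneg_left (mul_le_mul_of_nonneg_left h3 hK) hCz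
      _ = K * (Cd ^ z * (Cd ^ (-(d:ℝ)/2)) ^ ((4:ℝ)/((d:ℝ) - 4))) := by ring
      _ = K := by rw [h4, mul_one]
  have hc : (0:ℝ) < ((d:ℝ) - 4) / (2 * (d:ℝ)) := by positivity
  have h6 : ((d:ℝ) - 4) / (2 * (d:ℝ)) * (Cd ^ z * K ^ ((d:ℝ)/((d:ℝ) - 4)))
      ≤ ((d:ℝ) - 4) / (2 * (d:ℝ)) * K := mul_le_mul_of_nonneg_left h5 hc.le
  have h7 : ((d:ℝ) - 4) / (2 * (d:ℝ)) * P
      ≤ ((d:ℝ) - 4) / (2 * (d:ℝ)) * (Cd ^ z * K ^ ((d:ℝ)/((d:ℝ) - 4))) :=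
    mul_le_mul_of_nonneg_left h1 hc.le
  -- hence (2/d) K ≤ (1-δ₀)(2/d) W2
  have h8 : 2 / (d:ℝ) * K ≤ (1 - δ₀) * (2 / (d:ℝ) * Cd ^ (-(d:ℝ)/2)) := by
    have heq : K / 2 - ((d:ℝ) - 4) / (2 * (d:ℝ)) * K = 2 / (d:ℝ) * K := by
      field_simp; ring
    linarith
  have h9 := mul_le_mul_of_nonneg_left h8 hd0.le
  have heq2 : (d:ℝ) * (2 / (d:ℝ) * K) = 2 * K := by field_simp
  have heq3 : (d:ℝ) * ((1 - δ₀) * (2 / (d:ℝ) * Cd ^ (-(d:ℝ)/2)))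
      = 2 * ((1 - δ₀) * Cd ^ (-(d:ℝ)/2)) := by field_simp
  rw [heq2, heq3] at h9
  linarith
end
end

section
/- Let d ≥ 5 and let u ∈ Ḣ²(ℝ^d) satisfy ‖Δu‖_{L²} < ‖ΔW‖_{L²} and E(u) ≤ (1-δ₀) E(W) for some δ₀ > 0. Then there exists δ̄ = δ̄(δ₀, d) > 0 such that ∫(|Δu|² - |u|^{2d/(d-4)}) dx ≥ δ̄ ∫|Δu|² dx, and in particular E(u) ≥ 0. -/
noncomputable section

open Real

/-- Energy trapping, second part. With `K = ∫|Δu|²`, `P = ∫|u|^{2d/(d−4)}`, the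
Sobolev inequality `P^{(d−4)/(2d)} ≤ C_d K^{1/2}`, `‖ΔW‖₂² = C_d^{−d/2}` and
`E(W) = (2/d) C_d^{−d/2}`: if `K < ‖ΔW‖₂²` and `E(u) ≤ (1−δ₀)E(W)`, then
`∫(|Δu|² − |u|^{2d/(d−4)}) ≥ δ̄ ∫|Δu|²` for some `δ̄ = δ̄(δ₀,d) > 0`, and in
particular `E(u) ≥ 0`. -/
theorem energy_trapping_coercivity (d : ℕ) (hd : 5 ≤ d) (Cd : ℝ) (hCd : 0 < Cd)
    (δ₀ : ℝ) (hδ₀ : 0 < δ₀) :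
    ∃ δb > (0 : ℝ), ∀ K P : ℝ, 0 ≤ K → 0 ≤ P →
      P ^ (((d : ℝ) - 4) / (2 * (d : ℝ))) ≤ Cd * K ^ ((1 : ℝ) / 2) →
      K < Cd ^ (-(d : ℝ) / 2) →
      K / 2 - ((d : ℝ) - 4) / (2 * (d : ℝ)) * P ≤
        (1 - δ₀) * (2 / (d : ℝ) * Cd ^ (-(d : ℝ) / 2)) →
      δb * K ≤ K - P ∧ 0 ≤ K / 2 - ((d : ℝ) - 4) / (2 * (d : ℝ)) * P := by
  have hd5 : (5:ℝ) ≤ (d:ℝ) := by exact_mod_cast hd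
  have hd4 : (0:ℝ) < (d:ℝ) - 4 := by linarith
  have hdpos : (0:ℝ) < (d:ℝ) := by linarith
  set β : ℝ := 4 / ((d:ℝ) - 4) with hβ
  have hβpos : 0 < β := by positivity
  set m : ℝ := min δ₀ (1/2) with hm
  have hm0 : 0 < m := lt_min hδ₀ (by norm_num)
  have hm1 : m ≤ 1/2 := min_le_right _ _
  have hmδ : m ≤ δ₀ := min_le_left _ _
  have h1m0 : (0:ℝ) ≤ 1 - m := by linarith
  have h1m1 : 1 - m < 1 := by linarith
  have hpow1 : (1 - m) ^ β < 1 := Real.rpow_lt_one h1m0 h1m1 hβpos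
  refine ⟨1 - (1 - m) ^ β, by linarith, ?_⟩
  intro K P hK hP hSob hKlt hE
  set Ks : ℝ := Cd ^ (-(d:ℝ) / 2) with hKs
  have hKspos : 0 < Ks := Real.rpow_pos_of_pos hCd _
  have hpownn : 0 ≤ (1 - m) ^ β := Real.rpow_nonneg h1m0 _
  rcases eq_or_lt_of_le hK with hK0 | hKpos
  · -- K = 0
    have hK0' : K = 0 := hK0.symm
    subst hK0'
    have h0 : (0:ℝ) ^ ((1:ℝ)/2) = 0 := Real.zero_rpow (by norm_num)
    rw [h0, mul_zero] at hSob
    have hP0 : P = 0 := by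
      by_contra h
      have hPpos : 0 < P := lt_of_le_of_ne hP (Ne.symm h)
      have := Real.rpow_pos_of_pos hPpos (((d:ℝ) - 4) / (2 * (d:ℝ)))
      linarith
    subst hP0
    norm_num
  · -- K > 0
    set q : ℝ := 2 * (d:ℝ) / ((d:ℝ) - 4) with hq
    have hqpos : 0 < q := by positivity
    have hCdq : 0 < Cd ^ q := Real.rpow_pos_of_pos hCd _
    -- Step 1: raise Sobolev to power q
    have hstep1 : P ≤ Cd ^ q * K ^ ((d:ℝ) / ((d:ℝ) - 4)) := by
      have h := Real.rpow_le_rpow (Real.rpow_nonneg hP _) hSob hqpos.le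
      rw [← Real.rpow_mul hP,
        show ((d:ℝ) - 4) / (2 * (d:ℝ)) * q = 1 by
          rw [hq]; field_simp,
        Real.rpow_one,
        Real.mul_rpow hCd.le (Real.rpow_nonneg hK _),
        ← Real.rpow_mul hK,
        show (1:ℝ) / 2 * q = (d:ℝ) / ((d:ℝ) - 4) by
          rw [hq]; field_simp] at h
      exact h
    -- split the power
    have hsplit : K ^ ((d:ℝ) / ((d:ℝ) - 4)) = K ^ β * K := by
      rw [show (d:ℝ) / ((d:ℝ) - 4) = β + 1 by rw [hβ]; field_simp; ring,
        Real.rpow_add hKpos, Real.rpow_one]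
    rw [hsplit] at hstep1
    -- key identity: Cd^q * Ks^β = 1
    have hα : Cd ^ q * Ks ^ β = 1 := by
      rw [hKs, ← Real.rpow_mul hCd.le, ← Real.rpow_add hCd,
        show q + -(d:ℝ) / 2 * β = 0 by rw [hq, hβ]; field_simp; ring]
      exact Real.rpow_zero Cd
    have hKsβpos : 0 < Ks ^ β := Real.rpow_pos_of_pos hKspos _
    -- Step 2: P ≤ K
    have hPK : P ≤ K := by
      have h1 : K ^ β ≤ Ks ^ β := Real.rpow_le_rpow hK hKlt.le hβpos.le
      calc P ≤ Cd ^ q * (K ^ β * K) := hstep1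
        _ ≤ Cd ^ q * (Ks ^ β * K) := by
            apply mul_le_mul_of_nonneg_left _ hCdq.le
            exact mul_le_mul_of_nonneg_right h1 hKpos.le
        _ = (Cd ^ q * Ks ^ β) * K := by ring
        _ = K := by rw [hα, one_mul]
    have hc : (0:ℝ) ≤ ((d:ℝ) - 4) / (2 * (d:ℝ)) := by positivity
    -- energy lower bound : (2/d) K ≤ K/2 - c P
    have hlow : 2 / (d:ℝ) * K ≤ K / 2 - ((d:ℝ) - 4) / (2 * (d:ℝ)) * P := by
      have h1 : ((d:ℝ) - 4) / (2 * (d:ℝ)) * P ≤ ((d:ℝ) - 4) / (2 * (d:ℝ)) * K :=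
        mul_le_mul_of_nonneg_left hPK hc
      have h2 : K / 2 - ((d:ℝ) - 4) / (2 * (d:ℝ)) * K = 2 / (d:ℝ) * K := by
        field_simp; ring
      linarith
    -- Step 3: K ≤ (1-m) Ks
    have hKle : K ≤ (1 - m) * Ks := by
      have h1 : 2 / (d:ℝ) * K ≤ (1 - δ₀) * (2 / (d:ℝ) * Ks) := le_trans hlow hE
      have h2 : 0 < 2 / (d:ℝ) := by positivity
      have h3 : K ≤ (1 - δ₀) * Ks := by
        rw [mul_comm (1 - δ₀) (2 / (d:ℝ) * Ks), mul_assoc] at h1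
        have := (mul_le_mul_iff_right₀ h2).mp (by linarith [h1] : 2 / (d:ℝ) * K ≤ 2 / (d:ℝ) * (Ks * (1 - δ₀)))
        linarith [this]
      nlinarith [hKspos]
    -- Step 4: P ≤ (1-m)^β * K
    have hstep4 : P ≤ (1 - m) ^ β * K := by
      have h1 : K ^ β ≤ ((1 - m) * Ks) ^ β := Real.rpow_le_rpow hK hKle hβpos.le
      rw [Real.mul_rpow h1m0 hKspos.le] at h1
      calc P ≤ Cd ^ q * (K ^ β * K) := hstep1
        _ ≤ Cd ^ q * ((1 - m) ^ β * Ks ^ β * K) := by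
            apply mul_le_mul_of_nonneg_left _ hCdq.le
            exact mul_le_mul_of_nonneg_right h1 hKpos.le
        _ = (1 - m) ^ β * ((Cd ^ q * Ks ^ β) * K) := by ring
        _ = (1 - m) ^ β * K := by rw [hα, one_mul]
    constructor
    · nlinarith
    · have : 0 ≤ 2 / (d:ℝ) * K := by positivity
      linarith
end
end
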